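/- arXiv:1904.04451 — 2 statements merged into one kernel-verified Lean document; each statement's English description precedes it below -/
import Mathlib

section
/- Let t ∈ ℂ be transcendental over ℚ and a ∈ ℂ with a ≠ 0. Then the additive subgroup of (ℂ, +) generated by the set {t^(-2n) · a : n ∈ ℕ} is not finitely generated. -/
open Polynomial

lemma li_powers_of_transcendental (u : ℂ) (hu : Transcendental ℚ u) :
    LinearIndependent ℚ (fun n : ℕ => u ^ n) := by
  have hinj : Function.Injective (Polynomial.aeval u : ℚ[X] →ₐ[ℚ] ℂ) :=
    transcendental_iff_injective.mp hu
  have hX : LinearIndependent ℚ (fun n : ℕ => (X : ℚ[X]) ^ n) := by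
    have := (Polynomial.basisMonomials ℚ).linearIndependent
    simpa [Polynomial.X_pow_eq_monomial] using this
  have h2 := hX.map' (Polynomial.aeval u).toLinearMap (by
    rw [LinearMap.ker_eq_bot]; exact hinj)
  have : (⇑(Polynomial.aeval u).toLinearMap ∘ fun n : ℕ => (X : ℚ[X]) ^ n)
      = fun n : ℕ => u ^ n := by
    funext n; simp
  rwa [this] at h2

theorem subgroup_gen_by_neg_powers_not_fg (t a : ℂ) (ht : Transcendental ℚ t) (ha : a ≠ 0) :
    ¬ (AddSubgroup.closure {x : ℂ | ∃ n : ℕ, x = t ^ (-(2 * n : ℤ)) * a}).FG := by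
  intro hfg
  obtain ⟨S, hS⟩ := hfg
  have hu : Transcendental ℚ t⁻¹ := fun h => ht (IsAlgebraic.inv_iff.mp h)
  have hveq : ∀ n : ℕ, t ^ (-(2 * n : ℤ)) * a = (t⁻¹) ^ (2 * n) * a := by
    intro n
    congr 1
    rw [zpow_neg, ← inv_zpow, ← zpow_natCast t⁻¹]
    norm_num
  -- linear independence
  have hli : LinearIndependent ℚ (fun n : ℕ => t ^ (-(2 * n : ℤ)) * a) := by
    have h1 := li_powers_of_transcendental t⁻¹ hu
    have h2 : LinearIndependent ℚ (fun n : ℕ => (t⁻¹) ^ (2 * n)) :=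
      h1.comp (fun n => 2 * n) (fun m n h => by dsimp at h; omega)
    have h3 := h2.map' ((LinearMap.mulRight ℂ a).restrictScalars ℚ) (by
      rw [LinearMap.ker_eq_bot]
      exact fun x y h => mul_left_injective₀ ha h)
    have heq : (⇑((LinearMap.mulRight ℂ a).restrictScalars ℚ) ∘ fun n : ℕ => (t⁻¹) ^ (2 * n))
        = fun n : ℕ => t ^ (-(2 * n : ℤ)) * a := by
      funext n
      simp only [Function.comp_apply, LinearMap.coe_restrictScalars, LinearMap.mulRight_apply]
      rw [hveq n]
    rwa [heq] at h3
  -- all elements lie in the span of S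
  have hmem : ∀ n : ℕ, t ^ (-(2 * n : ℤ)) * a ∈ Submodule.span ℚ (S : Set ℂ) := by
    intro n
    have h1 : t ^ (-(2 * n : ℤ)) * a ∈
        AddSubgroup.closure {x : ℂ | ∃ n : ℕ, x = t ^ (-(2 * n : ℤ)) * a} :=
      AddSubgroup.subset_closure ⟨n, rfl⟩
    rw [← hS] at h1
    have h2 : AddSubgroup.closure (S : Set ℂ) ≤
        (Submodule.span ℚ (S : Set ℂ)).toAddSubgroup :=
      (AddSubgroup.closure_le _).mpr Submodule.subset_span
    exact h2 h1
  haveI : FiniteDimensional ℚ (Submodule.span ℚ (S : Set ℂ)) :=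
    FiniteDimensional.span_finset ℚ S
  have hli' : LinearIndependent ℚ (fun n : ℕ =>
      (⟨t ^ (-(2 * n : ℤ)) * a, hmem n⟩ : Submodule.span ℚ (S : Set ℂ))) :=
    hli.of_comp (Submodule.span ℚ (S : Set ℂ)).subtype
  have : Finite ℕ := hli'.finite
  exact absurd this (by exact fun h => not_finite ℕ)
end

section
/- The Cremona-type involution τ' of ℙ³ defined by [x₁:x₂:x₃:x₄] ↦ [α₁/x₁ : α₂/x₂ : α₃/x₃ : α₁α₂α₃/x₄] maps the quadric Q : α₁x₂x₃ + α₂x₁x₃ + α₃x₁x₂ + (x₁+x₂+x₃)x₄ = 0 to itself, on the locus where all coordinates are nonzero. -/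
theorem cremona_preserves_quadric (α₁ α₂ α₃ : ℂ)
    (h1 : α₁ ≠ 0) (h2 : α₂ ≠ 0) (h3 : α₃ ≠ 0)
    (x₁ x₂ x₃ x₄ : ℂ) (hx1 : x₁ ≠ 0) (hx2 : x₂ ≠ 0) (hx3 : x₃ ≠ 0) (hx4 : x₄ ≠ 0)
    (hQ : α₁ * x₂ * x₃ + α₂ * x₁ * x₃ + α₃ * x₁ * x₂ + (x₁ + x₂ + x₃) * x₄ = 0) :
    α₁ * (α₂ / x₂) * (α₃ / x₃) + α₂ * (α₁ / x₁) * (α₃ / x₃) +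
      α₃ * (α₁ / x₁) * (α₂ / x₂) +
      ((α₁ / x₁) + (α₂ / x₂) + (α₃ / x₃)) * (α₁ * α₂ * α₃ / x₄) = 0 := by
  field_simp
  linear_combination (α₁ * α₂ * α₃) * hQ
end
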